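/- Fix m ∈ ℕ. Let (pᵢ) be a sequence of polynomials of degree at most m with pᵢ(0) = 0 and max_{|ζ| ≤ 1} |pᵢ(ζ)| = 1, and let rᵢ denote the radius of the largest disk centered at 0 contained in the image pᵢ({|ζ| < 1}). Then inf_i rᵢ > 0; i.e., there is a constant c(m) > 0 so that every polynomial p of degree ≤ m with p(0)=0 and sup_{|ζ|≤1}|p| = 1 satisfies {|w| < c(m)} ⊆ p({|ζ| < 1}). -/

import Mathlib

private lemma aux_prod (ζ : ℂ) (hζ : norm ζ ≤ 1) (s : Multiset ℂ)
    (hs : ∀ z ∈ s, 1 ≤ norm z) :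
    (s.map fun z => norm (ζ - z)).prod
      ≤ 2 ^ Multiset.card s * (s.map norm).prod := by
  induction s using Multiset.induction_on with
  | empty => simp
  | cons a t ih =>
    simp only [Multiset.map_cons, Multiset.prod_cons, Multiset.card_cons]
    have ha : 1 ≤ norm a := hs a (Multiset.mem_cons_self a t)
    have h1 : norm (ζ - a) ≤ 2 * norm a := by
      calc norm (ζ - a) ≤ norm ζ + norm a :=
            norm_sub_le _ _
        _ ≤ 1 + norm a := by linarith
        _ ≤ 2 * norm a := by linarith
    have h2 : (t.map fun z => norm (ζ - z)).prod
        ≤ 2 ^ Multiset.card t * (t.map norm).prod :=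
      ih (fun z hz => hs z (Multiset.mem_cons_of_mem hz))
    have hn1 : (0:ℝ) ≤ (t.map fun z => norm (ζ - z)).prod := by
      apply Multiset.prod_nonneg
      intro x hx
      obtain ⟨z, _, rfl⟩ := Multiset.mem_map.mp hx
      exact norm_nonneg _
    have := mul_le_mul h1 h2 hn1 (by positivity)
    calc norm (ζ - a) * (t.map fun z => norm (ζ - z)).prod
        ≤ (2 * norm a) * (2 ^ Multiset.card t * (t.map norm).prod) := this
      _ = 2 ^ (Multiset.card t + 1) * (norm a * (t.map norm).prod) := by
          ring

/-- The normal-family argument in Theorem 6.7: there is a constant `c(m) > 0`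
such that every polynomial `p` of degree at most `m` with `p(0) = 0` and
`max_{|ζ|≤1} |p| = 1` satisfies `{|w| < c(m)} ⊆ p({|ζ| < 1})`. -/
theorem stmt13 (m : ℕ) :
    ∃ c : ℝ, 0 < c ∧ ∀ p : Polynomial ℂ, p.natDegree ≤ m → p.eval 0 = 0 →
      sSup ((fun ζ => ‖p.eval ζ‖) '' Metric.closedBall 0 1) = 1 →
      Metric.ball (0:ℂ) c ⊆ (fun ζ => p.eval ζ) '' Metric.ball 0 1 := by
  refine ⟨(2 ^ m + 2)⁻¹, by positivity, ?_⟩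
  intro p hdeg h0 hsup w hw
  by_contra hw_not
  simp only [Metric.mem_ball, dist_zero_right] at hw
  -- w ≠ 0, since 0 is in the image
  have hw0 : w ≠ 0 := by
    rintro rfl
    exact hw_not ⟨0, Metric.mem_ball_self one_pos, h0⟩
  have hwpos : 0 < norm w := by simpa using hw0
  set q : Polynomial ℂ := p - Polynomial.C w with hq
  -- all roots of q have modulus ≥ 1
  have hroots : ∀ z ∈ q.roots, 1 ≤ norm z := by
    intro z hz
    have hz0 : q.eval z = 0 := Polynomial.IsRoot.eq_zero (Polynomial.isRoot_of_mem_roots hz)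
    have hpz : p.eval z = w := by
      have : p.eval z - w = 0 := by simpa [hq] using hz0
      exact sub_eq_zero.mp this
    by_contra hlt
    push_neg at hlt
    exact hw_not ⟨z, by simpa [Metric.mem_ball] using hlt, hpz⟩
  -- pick ζ₀ with |p ζ₀| > 1 - |w|
  obtain ⟨y, hy_mem, hy⟩ : ∃ y ∈ ((fun ζ => norm (p.eval ζ)) '' Metric.closedBall 0 1),
      1 - norm w < y := by
    apply exists_lt_of_lt_csSup
    · exact ⟨norm (p.eval 0), ⟨0, Metric.mem_closedBall_self zero_le_one, rfl⟩⟩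
    · rw [hsup]; linarith
  obtain ⟨ζ₀, hζ₀_mem, rfl⟩ := hy_mem
  have hζ₀ : norm ζ₀ ≤ 1 := by
    simpa [Metric.mem_closedBall] using hζ₀_mem
  -- factorization of q
  have hsplit : q = Polynomial.C q.leadingCoeff *
      (q.roots.map fun a => Polynomial.X - Polynomial.C a).prod :=
    Polynomial.Splits.eq_prod_roots (IsAlgClosed.splits q)
  have heval : ∀ x : ℂ, q.eval x = q.leadingCoeff * (q.roots.map fun z => x - z).prod := by
    intro x
    conv_lhs => rw [hsplit]
    simp [Polynomial.eval_multiset_prod, Multiset.map_map, Function.comp]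
  have habs : ∀ x : ℂ, norm (q.eval x)
      = norm q.leadingCoeff * (q.roots.map fun z => norm (x - z)).prod := by
    intro x
    rw [heval x, norm_mul]
    congr 1
    refine (map_multiset_prod (normHom : ℂ →*₀ ℝ) _).trans ?_; rw [Multiset.map_map]
    rfl
  -- |q 0| = |w|
  have hq0 : norm (q.eval 0) = norm w := by
    simp [hq, h0]
  -- card bound
  have hcard : Multiset.card q.roots ≤ m := by
    refine le_trans (Polynomial.card_roots' q) ?_
    calc q.natDegree ≤ max p.natDegree (Polynomial.C w).natDegree :=
          Polynomial.natDegree_sub_le _ _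
      _ ≤ m := by simpa [Polynomial.natDegree_C] using hdeg
  -- the key estimate
  have hkey : norm (q.eval ζ₀) ≤ 2 ^ m * norm w := by
    rw [habs ζ₀]
    have h1 := aux_prod ζ₀ hζ₀ q.roots hroots
    have hlc : (0:ℝ) ≤ norm q.leadingCoeff := norm_nonneg _
    calc norm q.leadingCoeff * (q.roots.map fun z => norm (ζ₀ - z)).prod
        ≤ norm q.leadingCoeff *
            (2 ^ Multiset.card q.roots * (q.roots.map norm).prod) :=
          mul_le_mul_of_nonneg_left h1 hlc
      _ = 2 ^ Multiset.card q.roots *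
            (norm q.leadingCoeff * (q.roots.map norm).prod) := by ring
      _ = 2 ^ Multiset.card q.roots * norm (q.eval 0) := by
          rw [habs 0]; simp
      _ = 2 ^ Multiset.card q.roots * norm w := by rw [hq0]
      _ ≤ 2 ^ m * norm w := by
          apply mul_le_mul_of_nonneg_right _ (norm_nonneg _)
          exact pow_le_pow_right₀ (by norm_num) hcard
  -- lower bound
  have hlow : 1 - 2 * norm w < norm (q.eval ζ₀) := by
    have : norm (p.eval ζ₀) - norm w ≤ norm (q.eval ζ₀) := by
      have : norm (p.eval ζ₀) - norm w ≤ norm (p.eval ζ₀ - w) :=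
        norm_sub_norm_le _ _
      simpa [hq] using this
    linarith
  have h2m : (0:ℝ) < 2 ^ m := by positivity
  have hwlt : norm w < (2 ^ m + 2)⁻¹ := hw
  have : 1 < (2 ^ m + 2) * norm w := by nlinarith
  rw [inv_eq_one_div, lt_div_iff₀ (by positivity)] at hwlt
  nlinarith
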